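/- In the winner-bid auction with v_l < v_h, the pure strategy profile σ_l = δ_{v_l/2 − 1}, σ_h = δ_{v_l/2} is a Nash equilibrium in which the bid v_l/2 is the unique best response of the higher-valuation agent to σ_l, and every bid b > v_l/2 is strictly worse than v_l/2 − 1 for the lower-valuation agent against σ_h. -/
import Mathlib


open Finset Filter

/-- Utility in the winner-bid auction for an agent with value `v` bidding `b`
when the opponent bids `c`: the higher bidder wins the object and pays their own
bid to the other agent; ties are broken uniformly at random. -/
noncomputable def util (v b c : ℕ) : ℝ :=
  if c < b then (v : ℝ) - b
  else if b < c then (c : ℝ)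
  else (((v : ℝ) - b) + b) / 2

/-- Expected utility of bidding `b` against the mixed strategy `σ` of the opponent. -/
noncomputable def eu (pbar v : ℕ) (σ : ℕ → ℝ) (b : ℕ) : ℝ :=
  ∑ c ∈ range (pbar + 1), σ c * util v b c

/-- A mixed strategy on the bid space `{0,...,pbar}`. -/
def IsStrategy (pbar : ℕ) (σ : ℕ → ℝ) : Prop :=
  (∀ b, 0 ≤ σ b) ∧ (∑ b ∈ range (pbar + 1), σ b = 1) ∧ ∀ b, pbar < b → σ b = 0

/-- Nash equilibrium of the winner-bid auction with valuations `vl` (agent l) and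
`vh` (agent h). -/
def IsNash (pbar vl vh : ℕ) (σl σh : ℕ → ℝ) : Prop :=
  IsStrategy pbar σl ∧ IsStrategy pbar σh ∧
  (∀ b ∈ range (pbar + 1), 0 < σl b →
    ∀ b' ∈ range (pbar + 1), eu pbar vl σh b' ≤ eu pbar vl σh b) ∧
  (∀ b ∈ range (pbar + 1), 0 < σh b →
    ∀ b' ∈ range (pbar + 1), eu pbar vh σl b' ≤ eu pbar vh σl b)

/-- Expected payoff of the agent with value `v` playing `σown` against `σopp`. -/
noncomputable def payoff (pbar v : ℕ) (σown σopp : ℕ → ℝ) : ℝ :=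
  ∑ b ∈ range (pbar + 1), σown b * eu pbar v σopp b

/-- Probability that the agent playing `σown` receives the object. -/
noncomputable def winProb (pbar : ℕ) (σown σopp : ℕ → ℝ) : ℝ :=
  ∑ b ∈ range (pbar + 1), ∑ c ∈ range (pbar + 1),
    σown b * σopp c * (if c < b then 1 else if b < c then 0 else 1 / 2)

/-- An equilibrium is efficient if the higher-valuation agent (playing `σh`)
receives the object with probability one, i.e., the lower-valuation agent
receives it with probability zero. -/
def Efficient (pbar : ℕ) (σl σh : ℕ → ℝ) : Prop := winProb pbar σl σh = 0

/-- The pure strategy bidding `b`. -/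
noncomputable def pureS (b : ℕ) : ℕ → ℝ := fun c => if c = b then 1 else 0

/-- Weak payoff monotonicity for the agent with value `v` playing `σown` against `σopp`. -/
def WPMon (pbar v : ℕ) (σown σopp : ℕ → ℝ) : Prop :=
  ∀ m ∈ range (pbar + 1), ∀ n ∈ range (pbar + 1),
    σown n < σown m → eu pbar v σopp n < eu pbar v σopp m

/-- (Full) payoff monotonicity for the agent with value `v`. -/
def PMon (pbar v : ℕ) (σown σopp : ℕ → ℝ) : Prop :=
  ∀ m ∈ range (pbar + 1), ∀ n ∈ range (pbar + 1),
    (eu pbar v σopp n ≤ eu pbar v σopp m ↔ σown n ≤ σown m)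

/-- Empirical equilibrium: a Nash equilibrium that is the pointwise limit of a
sequence of weakly payoff monotone strategy profiles. -/
def IsEmpirical (pbar vl vh : ℕ) (σl σh : ℕ → ℝ) : Prop :=
  IsNash pbar vl vh σl σh ∧
  ∃ s : ℕ → (ℕ → ℝ) × (ℕ → ℝ),
    (∀ n, IsStrategy pbar (s n).1 ∧ IsStrategy pbar (s n).2 ∧
      WPMon pbar vl (s n).1 (s n).2 ∧ WPMon pbar vh (s n).2 (s n).1) ∧
    ∀ b, Tendsto (fun n => (s n).1 b) atTop (nhds (σl b)) ∧
         Tendsto (fun n => (s n).2 b) atTop (nhds (σh b))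


lemma eu_pure (pbar v c b : ℕ) (hc : c ≤ pbar) : eu pbar v (pureS c) b = util v b c := by
  unfold eu pureS
  rw [Finset.sum_eq_single c]
  · simp
  · intro b' _ h; simp [h]
  · intro h; exact absurd (Finset.mem_range.2 (Nat.lt_succ_of_le hc)) h

lemma pure_strategy (pbar c : ℕ) (hc : c ≤ pbar) : IsStrategy pbar (pureS c) := by
  refine ⟨fun b => ?_, ?_, fun b hb => ?_⟩
  · unfold pureS; split_ifs <;> norm_num
  · unfold pureS
    rw [Finset.sum_ite_eq' (range (pbar+1)) c (fun _ => (1:ℝ))]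
    rw [if_pos (Finset.mem_range.2 (Nat.lt_succ_of_le hc))]
  · unfold pureS; rw [if_neg (by omega)]

theorem stmt14 (vl vh pbar : ℕ) (hvl : 4 ≤ vl) (hevl : Even vl) (hevh : Even vh)
    (hlt : vl < vh) (hpbar : vh / 2 + 2 ≤ pbar) :
    IsNash pbar vl vh (pureS (vl / 2 - 1)) (pureS (vl / 2)) ∧
    (∀ b ∈ range (pbar + 1), b ≠ vl / 2 →
      eu pbar vh (pureS (vl / 2 - 1)) b < eu pbar vh (pureS (vl / 2 - 1)) (vl / 2)) ∧
    (∀ b ∈ range (pbar + 1), vl / 2 < b →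
      eu pbar vl (pureS (vl / 2)) b < eu pbar vl (pureS (vl / 2)) (vl / 2 - 1)) := by
  obtain ⟨r, hr⟩ := hevl
  obtain ⟨m, hm⟩ := hevh
  have hk : vl / 2 = r := by omega
  have hr2 : 2 ≤ r := by omega
  have hp : r + 3 ≤ pbar := by omega
  have hvh : 2 * r + 2 ≤ vh := by omega
  have hvhR : (2 * r + 2 : ℝ) ≤ (vh : ℝ) := by exact_mod_cast hvh
  have hrR : (2 : ℝ) ≤ (r : ℝ) := by exact_mod_cast hr2
  have hcast : ((r - 1 : ℕ) : ℝ) = (r : ℝ) - 1 := by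
    rw [Nat.cast_sub (by omega : 1 ≤ r)]; norm_num
  have hvlR : (vl : ℝ) = 2 * r := by exact_mod_cast (by omega : vl = 2 * r)
  -- util vh r (r-1) = vh - r
  have huh0 : util vh r (r - 1) = (vh : ℝ) - r := by
    unfold util; rw [if_pos (by omega : r - 1 < r)]
  have key_h : ∀ b, b ≤ pbar → b ≠ r → util vh b (r - 1) < util vh r (r - 1) := by
    intro b hb hne
    rw [huh0]
    unfold util
    split_ifs with h2 h3
    · have hb1 : r + 1 ≤ b := by omega
      have : (r : ℝ) + 1 ≤ (b : ℝ) := by exact_mod_cast hb1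
      linarith
    · rw [hcast]; linarith
    · linarith
  have hul0 : util vl (r - 1) r = (r : ℝ) := by
    unfold util
    rw [if_neg (by omega : ¬ r < r - 1), if_pos (by omega : r - 1 < r)]
  have key_l : ∀ b, util vl b r ≤ (r : ℝ) := by
    intro b
    unfold util
    split_ifs with h2 h3
    · have hb1 : r + 1 ≤ b := by omega
      have : (r : ℝ) + 1 ≤ (b : ℝ) := by exact_mod_cast hb1
      linarith
    · linarith
    · linarith
  have key_l' : ∀ b, r < b → util vl b r < util vl (r - 1) r := by
    intro b hb
    rw [hul0]
    unfold util
    rw [if_pos hb]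
    have : (r : ℝ) + 1 ≤ (b : ℝ) := by exact_mod_cast hb
    linarith
  have hr1p : r - 1 ≤ pbar := by omega
  have hrp : r ≤ pbar := by omega
  rw [hk]
  refine ⟨⟨pure_strategy pbar (r - 1) hr1p, pure_strategy pbar r hrp, ?_, ?_⟩, ?_, ?_⟩
  · intro b _ hpos b' hb'
    have hbe : b = r - 1 := by
      by_contra h
      simp [pureS, h] at hpos
    subst hbe
    rw [eu_pure pbar vl r b' hrp, eu_pure pbar vl r (r - 1) hrp, hul0]
    exact key_l b'
  · intro b _ hpos b' hb'
    have hbe : b = r := by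
      by_contra h
      simp [pureS, h] at hpos
    rw [hbe]
    rw [eu_pure pbar vh (r - 1) b' hr1p, eu_pure pbar vh (r - 1) r hr1p]
    rcases eq_or_ne b' r with h | h
    · subst h; exact le_rfl
    · exact le_of_lt (key_h b' (Nat.lt_succ_iff.1 (Finset.mem_range.1 hb')) h)
  · intro b hb hne
    rw [eu_pure pbar vh (r - 1) b hr1p, eu_pure pbar vh (r - 1) r hr1p]
    exact key_h b (by simpa using Nat.lt_succ_iff.1 (Finset.mem_range.1 hb)) hne
  · intro b hb hlt'
    rw [eu_pure pbar vl r b hrp, eu_pure pbar vl r (r - 1) hrp]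
    exact key_l' b hlt'
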